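/- Let n ≥ 3 and let w_0, …, w_l be a symmetric filter of length l (0 < l ≤ ⌊(n−1)/2⌋). Let W^AR ∈ ℝ^{n×n} be the Anti-Reflective matrix built from w, let Q^AR ∈ ℝ^{n×n} be the Anti-Reflective Transform matrix, and let D ∈ ℝ^{n×n} be the diagonal matrix with diagonal (1, λ̂_1, …, λ̂_{n−2}, 1), where λ̂_i = w_0 + 2∑_{j=1}^{l} w_j cos(jiπ/(n−1)). Then W^AR Q^AR = Q^AR D; moreover Q^AR is invertible, so W^AR = Q^AR D (Q^AR)^{−1}. -/

import Mathlib

/-- The Anti-Reflective matrix `W^AR ∈ ℝ^{n×n}` (0-based indices; `i.val` plays the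
role of the 1-based index `i - 1`) built from a filter `w` of length `l`,
where `z j = 2 ∑_{k=j}^{l} w k`. -/
def antiReflectiveMatrix (n l : ℕ) (w : ℕ → ℝ) : Matrix (Fin n) (Fin n) ℝ :=
  Matrix.of fun i j : Fin n =>
    if i.val = 0 then (if j.val = 0 then 2 * ∑ k ∈ Finset.Icc 1 l, w k + w 0 else 0)
    else if i.val = n - 1 then (if j.val = n - 1 then 2 * ∑ k ∈ Finset.Icc 1 l, w k + w 0 else 0)
    else if j.val = 0 then 2 * ∑ k ∈ Finset.Icc (i.val + 1) l, w k + w i.val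
    else if j.val = n - 1 then 2 * ∑ k ∈ Finset.Icc (n - i.val) l, w k + w (n - 1 - i.val)
    else w ((i.val : ℤ) - (j.val : ℤ)).natAbs
        - (w (i.val + j.val) + w (2 * n - 2 - i.val - j.val))

/-- The Anti-Reflective Transform (ART) matrix `Q^AR ∈ ℝ^{n×n}` (0-based indices):
first column `((n-i)/η)_{i=1}^n`, last column `((i-1)/η)_{i=1}^n` with
`η = √(∑_{j=0}^{n-1} j²)`, zeros elsewhere in the first and last rows, and the
DST-I entries `√(2/(n-1))·sin((i-1)(j-1)π/(n-1))` in the interior block. -/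
noncomputable def antiReflectiveTransform (n : ℕ) : Matrix (Fin n) (Fin n) ℝ :=
  Matrix.of fun i j : Fin n =>
    if j.val = 0 then
      ((n : ℝ) - 1 - (i.val : ℝ)) / Real.sqrt (∑ k ∈ Finset.range n, (k : ℝ) ^ 2)
    else if j.val = n - 1 then
      (i.val : ℝ) / Real.sqrt (∑ k ∈ Finset.range n, (k : ℝ) ^ 2)
    else if i.val = 0 ∨ i.val = n - 1 then 0
    else Real.sqrt (2 / ((n : ℝ) - 1)) *
      Real.sin ((i.val : ℝ) * (j.val : ℝ) * Real.pi / ((n : ℝ) - 1))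



open Finset in
lemma cos_sum_even (N : ℕ) (hN : 1 ≤ N) (m : ℤ) (hm : m ≠ 0) (hme : Even m)
    (hlt : m.natAbs < 2 * N) :
    ∑ i ∈ Finset.range N, Real.cos (i * m * Real.pi / N) = 0 := by
  have hNR : (N : ℝ) ≠ 0 := by positivity
  set x : ℝ := m * Real.pi / N with hx
  set z : ℂ := Complex.exp (x * Complex.I) with hz
  have hzi : ∀ i : ℕ, z ^ i = Complex.exp ((↑(i * x) : ℂ) * Complex.I) := by
    intro i
    rw [hz, ← Complex.exp_nat_mul]
    congr 1
    push_cast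
    ring
  have hre : ∀ i : ℕ, (z ^ i).re = Real.cos (i * m * Real.pi / N) := by
    intro i
    rw [hzi i]
    rw [show ((↑(i * x) : ℂ)) = ((i * x : ℝ) : ℂ) from rfl, Complex.exp_ofReal_mul_I_re]
    congr 1
    rw [hx]; ring
  have hNx : (N : ℝ) * x = m * Real.pi := by rw [hx]; field_simp
  have hzN : z ^ N = 1 := by
    rw [hzi]
    obtain ⟨t, ht⟩ := hme
    have : ((↑(↑N * x) : ℂ)) * Complex.I = (t : ℂ) * (2 * Real.pi * Complex.I) := by
      rw [hNx, ht]
      push_cast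
      ring
    rw [this, Complex.exp_int_mul_two_pi_mul_I]
  have hz1 : z ≠ 1 := by
    intro h
    rw [hz, Complex.exp_eq_one_iff] at h
    obtain ⟨k, hk⟩ := h
    have him := congrArg Complex.im hk
    simp [Complex.mul_im] at him
    -- him : x = k * (2 * π) (roughly)
    have hxr : x = k * (2 * Real.pi) := by
      simpa using him
    rw [hx] at hxr
    have hpi := Real.pi_ne_zero
    have h2 : (m : ℝ) * Real.pi = (2 * N * k) * Real.pi := by
      field_simp at hxr
      nlinarith [hxr]
    have h3 : (m : ℝ) = 2 * N * k := mul_right_cancel₀ hpi h2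
    have hmk : m = 2 * N * k := by exact_mod_cast h3
    rcases lt_trichotomy k 0 with h' | h' | h'
    · have hk1 : k ≤ -1 := by omega
      have : m ≤ -(2 * N) := by nlinarith [hk1, (show (0:ℤ) ≤ 2 * N by positivity)]
      omega
    · rw [h'] at hmk; simp at hmk; exact hm hmk
    · have hk1 : (1:ℤ) ≤ k := h'
      have : (2 * N : ℤ) ≤ m := by nlinarith [hk1, (show (0:ℤ) ≤ 2 * N by positivity)]
      omega
  have hgeom : ∑ i ∈ Finset.range N, z ^ i = 0 := by
    rw [geom_sum_eq hz1, hzN]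
    simp
  calc ∑ i ∈ Finset.range N, Real.cos (i * m * Real.pi / N)
      = (∑ i ∈ Finset.range N, z ^ i).re := by
        rw [Complex.re_sum]
        exact (Finset.sum_congr rfl fun i _ => (hre i).symm)
    _ = 0 := by rw [hgeom]; simp

open Finset in
lemma cos_sum_odd (N : ℕ) (hN : 1 ≤ N) (m : ℤ) (hmo : Odd m) :
    ∑ i ∈ Finset.range N, Real.cos (i * m * Real.pi / N) = 1 := by
  have hNR : (N : ℝ) ≠ 0 := by positivity
  set x : ℝ := m * Real.pi / N with hx
  set z : ℂ := Complex.exp (x * Complex.I) with hz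
  have hzi : ∀ i : ℕ, z ^ i = Complex.exp ((↑(i * x) : ℂ) * Complex.I) := by
    intro i
    rw [hz, ← Complex.exp_nat_mul]
    congr 1
    push_cast
    ring
  have hre : ∀ i : ℕ, (z ^ i).re = Real.cos (i * m * Real.pi / N) := by
    intro i
    rw [hzi i]
    rw [show ((↑(i * x) : ℂ)) = ((i * x : ℝ) : ℂ) from rfl, Complex.exp_ofReal_mul_I_re]
    congr 1
    rw [hx]; ring
  have hNx : (N : ℝ) * x = m * Real.pi := by rw [hx]; field_simp
  have hzN : z ^ N = -1 := by
    rw [hzi]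
    obtain ⟨t, ht⟩ := hmo
    have harg : ((↑(↑N * x) : ℂ)) * Complex.I
        = (t : ℂ) * (2 * Real.pi * Complex.I) + Real.pi * Complex.I := by
      rw [hNx, ht]
      push_cast
      ring
    rw [harg, Complex.exp_add, Complex.exp_int_mul_two_pi_mul_I, Complex.exp_pi_mul_I]
    ring
  have hz1 : z ≠ 1 := by
    intro h
    rw [h] at hzN
    simp at hzN
    norm_num at hzN
  have hz0 : z ≠ 0 := Complex.exp_ne_zero _
  have hgeom : ∑ i ∈ Finset.range N, z ^ i = -2 / (z - 1) := by
    rw [geom_sum_eq hz1, hzN]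
    ring
  have hconj : (starRingEnd ℂ) z = z⁻¹ := by
    rw [hz, ← Complex.exp_conj, ← Complex.exp_neg]
    congr 1
    simp [Complex.conj_ofReal]
  have hz1' : z - 1 ≠ 0 := sub_ne_zero.mpr hz1
  have e1 : (starRingEnd ℂ) (-2 / (z - 1)) = -2 / (z⁻¹ - 1) := by
    rw [map_div₀, map_sub, hconj, map_neg, map_ofNat, map_one]
  have e2 : -2 / (z⁻¹ - 1) = 2 * z / (z - 1) := by
    rw [show z⁻¹ - 1 = (1 - z) / z by field_simp]
    rw [div_div_eq_mul_div]
    rw [show (-2 : ℂ) * z / (1 - z) = 2 * z / (z - 1) by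
      rw [div_eq_div_iff (by intro h; apply hz1'; linear_combination -h) hz1']
      ring]
  have hkey : (-2 / (z - 1)) + (starRingEnd ℂ) (-2 / (z - 1)) = 2 := by
    rw [e1, e2, ← add_div, show (-2 + 2 * z : ℂ) = 2 * (z - 1) by ring,
      mul_div_assoc, div_self hz1', mul_one]
  have hrepart : (-2 / (z - 1)).re = 1 := by
    have := Complex.add_conj (-2 / (z - 1))
    rw [hkey] at this
    have h2 : (2 : ℂ) = ((2 : ℝ) : ℂ) := by norm_num
    rw [h2] at this
    have : (2 : ℝ) = 2 * (-2 / (z - 1)).re := by exact_mod_cast this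
    linarith
  calc ∑ i ∈ Finset.range N, Real.cos (i * m * Real.pi / N)
      = (∑ i ∈ Finset.range N, z ^ i).re := by
        rw [Complex.re_sum]
        exact (Finset.sum_congr rfl fun i _ => (hre i).symm)
    _ = 1 := by rw [hgeom, hrepart]

open Finset in
lemma sin_orth (N : ℕ) (hN : 2 ≤ N) (a b : ℕ) (ha1 : 1 ≤ a) (haN : a ≤ N - 1)
    (hb1 : 1 ≤ b) (hbN : b ≤ N - 1) :
    ∑ i ∈ Finset.Icc 1 (N - 1),
        Real.sin (i * a * Real.pi / N) * Real.sin (i * b * Real.pi / N)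
      = if a = b then (N : ℝ) / 2 else 0 := by
  have hN1 : 1 ≤ N := by omega
  have hext : ∑ i ∈ Finset.Icc 1 (N - 1),
        Real.sin (i * a * Real.pi / N) * Real.sin (i * b * Real.pi / N)
      = ∑ i ∈ Finset.range N,
        Real.sin (i * a * Real.pi / N) * Real.sin (i * b * Real.pi / N) := by
    apply Finset.sum_subset
    · intro x hx
      simp only [Finset.mem_Icc] at hx
      simp only [Finset.mem_range]
      omega
    · intro x hx hx'
      simp only [Finset.mem_range] at hx
      simp only [Finset.mem_Icc] at hx'
      have : x = 0 := by omega
      subst this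
      simp
  have key : ∀ m : ℤ, ∀ i : ℕ, (i : ℝ) * (m : ℝ) * Real.pi / N
      = i * m * Real.pi / N := fun _ _ => rfl
  have hprod : ∀ i : ℕ,
      Real.sin (i * a * Real.pi / N) * Real.sin (i * b * Real.pi / N)
      = (Real.cos ((i : ℝ) * (((a : ℤ) - b : ℤ) : ℝ) * Real.pi / N)
          - Real.cos ((i : ℝ) * (((a : ℤ) + b : ℤ) : ℝ) * Real.pi / N)) / 2 := by
    intro i
    have e1 : (i : ℝ) * (((a : ℤ) - b : ℤ) : ℝ) * Real.pi / N
        = i * a * Real.pi / N - i * b * Real.pi / N := by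
      push_cast
      ring
    have e2 : (i : ℝ) * (((a : ℤ) + b : ℤ) : ℝ) * Real.pi / N
        = i * a * Real.pi / N + i * b * Real.pi / N := by
      push_cast
      ring
    rw [e1, e2, Real.cos_sub, Real.cos_add]
    ring
  rw [hext, Finset.sum_congr rfl (fun i _ => hprod i)]
  have hsplit : ∑ i ∈ Finset.range N,
      (Real.cos ((i : ℝ) * (((a : ℤ) - b : ℤ) : ℝ) * Real.pi / N)
        - Real.cos ((i : ℝ) * (((a : ℤ) + b : ℤ) : ℝ) * Real.pi / N)) / 2
      = ((∑ i ∈ Finset.range N, Real.cos ((i : ℝ) * (((a : ℤ) - b : ℤ) : ℝ) * Real.pi / N))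
        - ∑ i ∈ Finset.range N, Real.cos ((i : ℝ) * (((a : ℤ) + b : ℤ) : ℝ) * Real.pi / N)) / 2 := by
    rw [← Finset.sum_sub_distrib, Finset.sum_div]
  rw [hsplit]
  by_cases hab : a = b
  · subst hab
    have h1 : ∑ i ∈ Finset.range N, Real.cos ((i : ℝ) * (((a : ℤ) - a : ℤ) : ℝ) * Real.pi / N)
        = N := by
      have : ∀ i ∈ Finset.range N,
          Real.cos ((i : ℝ) * (((a : ℤ) - a : ℤ) : ℝ) * Real.pi / N) = 1 := by
        intro i _
        simp
      rw [Finset.sum_congr rfl this]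
      simp
    have h2 : ∑ i ∈ Finset.range N, Real.cos ((i : ℝ) * (((a : ℤ) + a : ℤ) : ℝ) * Real.pi / N)
        = 0 := by
      apply cos_sum_even N hN1 _ (by omega) (by exact ⟨a, by ring⟩) (by omega)
    rw [h1, h2, if_pos rfl]
    ring
  · rw [if_neg hab]
    rcases Int.even_or_odd ((a : ℤ) - b) with he | ho
    · have h1 := cos_sum_even N hN1 ((a : ℤ) - b) (by omega) he (by omega)
      have h2 : Even ((a : ℤ) + b) := by
        obtain ⟨t, ht⟩ := he
        exact ⟨t + b, by omega⟩
      have h3 := cos_sum_even N hN1 ((a : ℤ) + b) (by omega) h2 (by omega)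
      rw [h1, h3]
      ring
    · have h1 := cos_sum_odd N hN1 ((a : ℤ) - b) ho
      have h2 : Odd ((a : ℤ) + b) := by
        obtain ⟨t, ht⟩ := ho
        exact ⟨t + b, by omega⟩
      have h3 := cos_sum_odd N hN1 ((a : ℤ) + b) h2
      rw [h1, h3]
      ring

open Finset in
lemma conv_key (n l : ℕ) (hn : 3 ≤ n) (hl : 1 ≤ l) (hln : 2 * l ≤ n - 1)
    (w : ℕ → ℝ) (hzero : ∀ k, l < k → w k = 0)
    (i : ℤ) (hi1 : 1 ≤ i) (hi2 : i ≤ (n : ℤ) - 2)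
    (f : ℤ → ℝ)
    (hf1 : ∀ t : ℤ, f (-t) = 2 * f 0 - f t)
    (hf2 : ∀ t : ℤ, f (2 * (n : ℤ) - 2 - t) = 2 * f ((n : ℤ) - 1) - f t) :
    (2 * ∑ k ∈ Finset.Icc (i + 1) (l : ℤ), w k.natAbs + w i.natAbs) * f 0
      + (2 * ∑ k ∈ Finset.Icc ((n : ℤ) - i) (l : ℤ), w k.natAbs
          + w ((n : ℤ) - 1 - i).natAbs) * f ((n : ℤ) - 1)
      + ∑ k ∈ Finset.Icc (1 : ℤ) ((n : ℤ) - 2),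
          (w (i - k).natAbs - w (i + k).natAbs - w (2 * (n : ℤ) - 2 - i - k).natAbs) * f k
      = w 0 * f i
        + ∑ m ∈ Finset.Icc (1 : ℤ) (l : ℤ), w m.natAbs * (f (i - m) + f (i + m)) := by
  have key : ∀ a : ℤ, 1 ≤ a → ∑ m ∈ Finset.Icc a (l : ℤ), w m.natAbs
      = w a.natAbs + ∑ m ∈ Finset.Icc (a + 1) (l : ℤ), w m.natAbs := by
    intro a ha
    rcases le_or_gt a l with h | h
    · rw [show Finset.Icc a (l : ℤ) = insert a (Finset.Icc (a + 1) (l : ℤ)) by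
        ext x; simp only [Finset.mem_Icc, Finset.mem_insert]; omega]
      rw [Finset.sum_insert (by simp only [Finset.mem_Icc]; omega)]
    · rw [Finset.Icc_eq_empty (by omega), Finset.Icc_eq_empty (by omega)]
      simp [hzero a.natAbs (by omega)]
  set T := ∑ k ∈ Finset.Icc (i - l) (i + l), w (i - k).natAbs * f k with hT
  -- Step A : T equals the right-hand side
  have hA : T = w 0 * f i
      + ∑ m ∈ Finset.Icc (1 : ℤ) (l : ℤ), w m.natAbs * (f (i - m) + f (i + m)) := by
    have h1 : T = ∑ m ∈ Finset.Icc (-(l : ℤ)) (l : ℤ), w m.natAbs * f (i - m) := by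
      rw [hT]
      refine Finset.sum_nbij' (fun k => i - k) (fun m => i - m) ?_ ?_ ?_ ?_ ?_
      · intro a ha; simp only [Finset.mem_Icc] at *; omega
      · intro a ha; simp only [Finset.mem_Icc] at *; omega
      · intro a _; ring
      · intro a _; ring
      · intro a _; rw [show i - (i - a) = a by ring]
    have h2 : Finset.Icc (-(l : ℤ)) (l : ℤ)
        = Finset.Icc (-(l : ℤ)) (-1) ∪ Finset.Icc (0 : ℤ) (l : ℤ) := by
      ext x; simp only [Finset.mem_Icc, Finset.mem_union]; omega
    have h3 : Disjoint (Finset.Icc (-(l : ℤ)) (-1)) (Finset.Icc (0 : ℤ) (l : ℤ)) := by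
      rw [Finset.disjoint_left]
      intro x hx hx'; simp only [Finset.mem_Icc] at *; omega
    have h4 : Finset.Icc (0 : ℤ) (l : ℤ) = insert 0 (Finset.Icc (1 : ℤ) (l : ℤ)) := by
      ext x; simp only [Finset.mem_Icc, Finset.mem_insert]; omega
    have h5 : ∑ m ∈ Finset.Icc (-(l : ℤ)) (-1), w m.natAbs * f (i - m)
        = ∑ m ∈ Finset.Icc (1 : ℤ) (l : ℤ), w m.natAbs * f (i + m) := by
      refine Finset.sum_nbij' (fun m => -m) (fun m => -m) ?_ ?_ ?_ ?_ ?_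
      · intro a ha; simp only [Finset.mem_Icc] at *; omega
      · intro a ha; simp only [Finset.mem_Icc] at *; omega
      · intro a _; ring
      · intro a _; ring
      · intro a _
        rw [show i + -a = i - a by ring, Int.natAbs_neg]
    have h6 : ∑ m ∈ Finset.Icc (1 : ℤ) (l : ℤ), w m.natAbs * (f (i - m) + f (i + m))
        = ∑ m ∈ Finset.Icc (1 : ℤ) (l : ℤ), w m.natAbs * f (i - m)
          + ∑ m ∈ Finset.Icc (1 : ℤ) (l : ℤ), w m.natAbs * f (i + m) := by
      rw [← Finset.sum_add_distrib]
      exact Finset.sum_congr rfl fun m _ => by ring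
    rw [h1, h2, Finset.sum_union h3, h4, Finset.sum_insert (by simp), h5, h6]
    simp only [Int.natAbs_zero, sub_zero]
    ring
  -- Step B : T equals the left-hand side
  have hB1 : T = ∑ k ∈ Finset.Icc (1 - (l : ℤ)) ((n : ℤ) - 2 + l), w (i - k).natAbs * f k := by
    rw [hT]
    apply Finset.sum_subset
    · intro x hx; simp only [Finset.mem_Icc] at *; omega
    · intro x hx hx'
      simp only [Finset.mem_Icc] at hx hx'
      rw [hzero (i - x).natAbs (by omega), zero_mul]
  have hB2 : Finset.Icc (1 - (l : ℤ)) ((n : ℤ) - 2 + l)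
      = Finset.Icc (1 - (l : ℤ)) 0
        ∪ (Finset.Icc (1 : ℤ) ((n : ℤ) - 2) ∪ Finset.Icc ((n : ℤ) - 1) ((n : ℤ) - 2 + l)) := by
    ext x
    simp only [Finset.mem_Icc, Finset.mem_union]
    omega
  have hd1 : Disjoint (Finset.Icc (1 - (l : ℤ)) 0)
      (Finset.Icc (1 : ℤ) ((n : ℤ) - 2) ∪ Finset.Icc ((n : ℤ) - 1) ((n : ℤ) - 2 + l)) := by
    rw [Finset.disjoint_left]
    intro x hx hx'
    simp only [Finset.mem_Icc, Finset.mem_union] at *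
    omega
  have hd2 : Disjoint (Finset.Icc (1 : ℤ) ((n : ℤ) - 2))
      (Finset.Icc ((n : ℤ) - 1) ((n : ℤ) - 2 + l)) := by
    rw [Finset.disjoint_left]
    intro x hx hx'
    simp only [Finset.mem_Icc] at *
    omega
  -- Left boundary piece
  have hL : ∑ k ∈ Finset.Icc (1 - (l : ℤ)) 0, w (i - k).natAbs * f k
      = f 0 * (2 * ∑ k ∈ Finset.Icc (i + 1) (l : ℤ), w k.natAbs + w i.natAbs)
        - ∑ k ∈ Finset.Icc (1 : ℤ) ((n : ℤ) - 2), w (i + k).natAbs * f k := by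
    have e1 : ∑ k ∈ Finset.Icc (1 - (l : ℤ)) 0, w (i - k).natAbs * f k
        = ∑ k ∈ Finset.Icc (0 : ℤ) ((l : ℤ) - 1), w (i + k).natAbs * (2 * f 0 - f k) := by
      refine Finset.sum_nbij' (fun k => -k) (fun k => -k) ?_ ?_ ?_ ?_ ?_
      · intro a ha; simp only [Finset.mem_Icc] at *; omega
      · intro a ha; simp only [Finset.mem_Icc] at *; omega
      · intro a _; ring
      · intro a _; ring
      · intro a _
        have h := hf1 (-a)
        rw [neg_neg] at h
        rw [h, show i + -a = i - a by ring]
    have e2 : ∑ k ∈ Finset.Icc (0 : ℤ) ((l : ℤ) - 1), w (i + k).natAbs * (2 * f 0 - f k)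
        = 2 * f 0 * (∑ k ∈ Finset.Icc (0 : ℤ) ((l : ℤ) - 1), w (i + k).natAbs)
          - ∑ k ∈ Finset.Icc (0 : ℤ) ((l : ℤ) - 1), w (i + k).natAbs * f k := by
      rw [Finset.sum_congr rfl (fun k _ => by ring :
        ∀ k ∈ Finset.Icc (0 : ℤ) ((l : ℤ) - 1), w (i + k).natAbs * (2 * f 0 - f k)
          = 2 * f 0 * w (i + k).natAbs - w (i + k).natAbs * f k),
        Finset.sum_sub_distrib, ← Finset.mul_sum]
    have e3 : ∑ k ∈ Finset.Icc (0 : ℤ) ((l : ℤ) - 1), w (i + k).natAbs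
        = w i.natAbs + ∑ k ∈ Finset.Icc (i + 1) (l : ℤ), w k.natAbs := by
      have e3a : ∑ k ∈ Finset.Icc (0 : ℤ) ((l : ℤ) - 1), w (i + k).natAbs
          = ∑ m ∈ Finset.Icc i (i + (l : ℤ) - 1), w m.natAbs := by
        refine Finset.sum_nbij' (fun k => i + k) (fun m => m - i) ?_ ?_ ?_ ?_ ?_
        · intro a ha; simp only [Finset.mem_Icc] at *; omega
        · intro a ha; simp only [Finset.mem_Icc] at *; omega
        · intro a _; ring
        · intro a _; ring
        · intro a _; rfl
      have e3b : ∑ m ∈ Finset.Icc i (l : ℤ), w m.natAbs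
          = ∑ m ∈ Finset.Icc i (i + (l : ℤ) - 1), w m.natAbs := by
        apply Finset.sum_subset
        · intro x hx; simp only [Finset.mem_Icc] at *; omega
        · intro x hx hx'
          simp only [Finset.mem_Icc] at hx hx'
          exact hzero x.natAbs (by omega)
      rw [e3a, ← e3b, key i hi1]
    have e4 : ∑ k ∈ Finset.Icc (0 : ℤ) ((l : ℤ) - 1), w (i + k).natAbs * f k
        = w i.natAbs * f 0
          + ∑ k ∈ Finset.Icc (1 : ℤ) ((n : ℤ) - 2), w (i + k).natAbs * f k := by
      rw [show Finset.Icc (0 : ℤ) ((l : ℤ) - 1)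
          = insert 0 (Finset.Icc (1 : ℤ) ((l : ℤ) - 1)) by
        ext x; simp only [Finset.mem_Icc, Finset.mem_insert]; omega]
      rw [Finset.sum_insert (by simp only [Finset.mem_Icc]; omega)]
      rw [show i + 0 = i by ring]
      congr 1
      apply Finset.sum_subset
      · intro x hx; simp only [Finset.mem_Icc] at *; omega
      · intro x hx hx'
        simp only [Finset.mem_Icc] at hx hx'
        rw [hzero (i + x).natAbs (by omega), zero_mul]
    rw [e1, e2, e3, e4]
    ring
  -- Right boundary piece
  have hR : ∑ k ∈ Finset.Icc ((n : ℤ) - 1) ((n : ℤ) - 2 + l), w (i - k).natAbs * f k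
      = f ((n : ℤ) - 1) * (2 * ∑ k ∈ Finset.Icc ((n : ℤ) - i) (l : ℤ), w k.natAbs
          + w ((n : ℤ) - 1 - i).natAbs)
        - ∑ k ∈ Finset.Icc (1 : ℤ) ((n : ℤ) - 2), w (2 * (n : ℤ) - 2 - i - k).natAbs * f k := by
    have e1 : ∑ k ∈ Finset.Icc ((n : ℤ) - 1) ((n : ℤ) - 2 + l), w (i - k).natAbs * f k
        = ∑ k ∈ Finset.Icc ((n : ℤ) - l) ((n : ℤ) - 1),
            w (2 * (n : ℤ) - 2 - i - k).natAbs * (2 * f ((n : ℤ) - 1) - f k) := by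
      refine Finset.sum_nbij' (fun k => 2 * (n : ℤ) - 2 - k) (fun k => 2 * (n : ℤ) - 2 - k)
        ?_ ?_ ?_ ?_ ?_
      · intro a ha; simp only [Finset.mem_Icc] at *; omega
      · intro a ha; simp only [Finset.mem_Icc] at *; omega
      · intro a _; ring
      · intro a _; ring
      · intro a _
        have h := hf2 (2 * (n : ℤ) - 2 - a)
        rw [show 2 * (n : ℤ) - 2 - (2 * (n : ℤ) - 2 - a) = a by ring] at h
        rw [h, show 2 * (n : ℤ) - 2 - i - (2 * (n : ℤ) - 2 - a) = -(i - a) by ring,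
          Int.natAbs_neg]
    have e2 : ∑ k ∈ Finset.Icc ((n : ℤ) - l) ((n : ℤ) - 1),
            w (2 * (n : ℤ) - 2 - i - k).natAbs * (2 * f ((n : ℤ) - 1) - f k)
        = 2 * f ((n : ℤ) - 1) * (∑ k ∈ Finset.Icc ((n : ℤ) - l) ((n : ℤ) - 1),
              w (2 * (n : ℤ) - 2 - i - k).natAbs)
          - ∑ k ∈ Finset.Icc ((n : ℤ) - l) ((n : ℤ) - 1),
              w (2 * (n : ℤ) - 2 - i - k).natAbs * f k := by
      rw [Finset.sum_congr rfl (fun k _ => by ring :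
        ∀ k ∈ Finset.Icc ((n : ℤ) - l) ((n : ℤ) - 1),
          w (2 * (n : ℤ) - 2 - i - k).natAbs * (2 * f ((n : ℤ) - 1) - f k)
          = 2 * f ((n : ℤ) - 1) * w (2 * (n : ℤ) - 2 - i - k).natAbs
            - w (2 * (n : ℤ) - 2 - i - k).natAbs * f k),
        Finset.sum_sub_distrib, ← Finset.mul_sum]
    have e3 : ∑ k ∈ Finset.Icc ((n : ℤ) - l) ((n : ℤ) - 1),
            w (2 * (n : ℤ) - 2 - i - k).natAbs
        = w ((n : ℤ) - 1 - i).natAbs + ∑ k ∈ Finset.Icc ((n : ℤ) - i) (l : ℤ), w k.natAbs := by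
      have e3a : ∑ k ∈ Finset.Icc ((n : ℤ) - l) ((n : ℤ) - 1),
              w (2 * (n : ℤ) - 2 - i - k).natAbs
          = ∑ m ∈ Finset.Icc ((n : ℤ) - 1 - i) ((n : ℤ) - 2 + l - i), w m.natAbs := by
        refine Finset.sum_nbij' (fun k => 2 * (n : ℤ) - 2 - i - k)
          (fun m => 2 * (n : ℤ) - 2 - i - m) ?_ ?_ ?_ ?_ ?_
        · intro a ha; simp only [Finset.mem_Icc] at *; omega
        · intro a ha; simp only [Finset.mem_Icc] at *; omega
        · intro a _; ring
        · intro a _; ring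
        · intro a _; rfl
      have e3b : ∑ m ∈ Finset.Icc ((n : ℤ) - 1 - i) (l : ℤ), w m.natAbs
          = ∑ m ∈ Finset.Icc ((n : ℤ) - 1 - i) ((n : ℤ) - 2 + l - i), w m.natAbs := by
        apply Finset.sum_subset
        · intro x hx; simp only [Finset.mem_Icc] at *; omega
        · intro x hx hx'
          simp only [Finset.mem_Icc] at hx hx'
          exact hzero x.natAbs (by omega)
      rw [e3a, ← e3b, key ((n : ℤ) - 1 - i) (by omega),
        show (n : ℤ) - 1 - i + 1 = (n : ℤ) - i by ring]
    have e4 : ∑ k ∈ Finset.Icc ((n : ℤ) - l) ((n : ℤ) - 1),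
            w (2 * (n : ℤ) - 2 - i - k).natAbs * f k
        = w ((n : ℤ) - 1 - i).natAbs * f ((n : ℤ) - 1)
          + ∑ k ∈ Finset.Icc (1 : ℤ) ((n : ℤ) - 2),
              w (2 * (n : ℤ) - 2 - i - k).natAbs * f k := by
      rw [show Finset.Icc ((n : ℤ) - l) ((n : ℤ) - 1)
          = insert ((n : ℤ) - 1) (Finset.Icc ((n : ℤ) - l) ((n : ℤ) - 2)) by
        ext x; simp only [Finset.mem_Icc, Finset.mem_insert]; omega]
      rw [Finset.sum_insert (by simp only [Finset.mem_Icc]; omega)]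
      rw [show 2 * (n : ℤ) - 2 - i - ((n : ℤ) - 1) = (n : ℤ) - 1 - i by ring]
      congr 1
      apply Finset.sum_subset
      · intro x hx; simp only [Finset.mem_Icc] at *; omega
      · intro x hx hx'
        simp only [Finset.mem_Icc] at hx hx'
        rw [hzero (2 * (n : ℤ) - 2 - i - x).natAbs (by omega), zero_mul]
    rw [e1, e2, e3, e4]
    ring
  -- assemble
  have hmid : ∑ k ∈ Finset.Icc (1 : ℤ) ((n : ℤ) - 2),
        (w (i - k).natAbs - w (i + k).natAbs - w (2 * (n : ℤ) - 2 - i - k).natAbs) * f k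
      = ∑ k ∈ Finset.Icc (1 : ℤ) ((n : ℤ) - 2), w (i - k).natAbs * f k
        - ∑ k ∈ Finset.Icc (1 : ℤ) ((n : ℤ) - 2), w (i + k).natAbs * f k
        - ∑ k ∈ Finset.Icc (1 : ℤ) ((n : ℤ) - 2), w (2 * (n : ℤ) - 2 - i - k).natAbs * f k := by
    rw [← Finset.sum_sub_distrib, ← Finset.sum_sub_distrib]
    exact Finset.sum_congr rfl fun k _ => by ring
  have hTL : T = f 0 * (2 * ∑ k ∈ Finset.Icc (i + 1) (l : ℤ), w k.natAbs + w i.natAbs)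
      - ∑ k ∈ Finset.Icc (1 : ℤ) ((n : ℤ) - 2), w (i + k).natAbs * f k
      + ∑ k ∈ Finset.Icc (1 : ℤ) ((n : ℤ) - 2), w (i - k).natAbs * f k
      + (f ((n : ℤ) - 1) * (2 * ∑ k ∈ Finset.Icc ((n : ℤ) - i) (l : ℤ), w k.natAbs
          + w ((n : ℤ) - 1 - i).natAbs)
        - ∑ k ∈ Finset.Icc (1 : ℤ) ((n : ℤ) - 2),
            w (2 * (n : ℤ) - 2 - i - k).natAbs * f k) := by
    rw [hB1, hB2, Finset.sum_union hd1, Finset.sum_union hd2, hL, hR]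
    ring
  rw [hmid, ← hA, hTL]
  ring

open Finset in
lemma sum_Icc_coe (F : ℤ → ℝ) (a b : ℕ) :
    ∑ k ∈ Finset.Icc (a : ℤ) (b : ℤ), F k = ∑ k ∈ Finset.Icc a b, F (k : ℤ) := by
  refine Finset.sum_nbij' (fun k => k.toNat) (fun k => (k : ℤ)) ?_ ?_ ?_ ?_ ?_
  · intro x hx; simp only [Finset.mem_Icc] at *; beta_reduce; omega
  · intro x hx; simp only [Finset.mem_Icc] at *; beta_reduce; omega
  · intro x hx; simp only [Finset.mem_Icc] at hx; beta_reduce; omega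
  · intro x hx; simp only [Finset.mem_Icc] at hx; beta_reduce; omega
  · intro x hx; simp only [Finset.mem_Icc] at hx; beta_reduce; congr 1; omega


open Finset in
lemma row_apply (n l : ℕ) (hn : 3 ≤ n) (hl : 1 ≤ l) (hln : 2 * l ≤ n - 1)
    (w : ℕ → ℝ) (hzero : ∀ k, l < k → w k = 0)
    (i : Fin n) (hi0 : i.val ≠ 0) (hin : i.val ≠ n - 1)
    (f : ℤ → ℝ)
    (hf1 : ∀ t : ℤ, f (-t) = 2 * f 0 - f t)
    (hf2 : ∀ t : ℤ, f (2 * (n : ℤ) - 2 - t) = 2 * f ((n : ℤ) - 1) - f t) :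
    ∑ k : Fin n, antiReflectiveMatrix n l w i k * f (k.val)
      = w 0 * f (i.val)
        + ∑ m ∈ Finset.Icc (1 : ℤ) (l : ℤ), w m.natAbs * (f (i.val - m) + f (i.val + m)) := by
  obtain ⟨m, rfl⟩ : ∃ m, n = m + 2 := ⟨n - 2, by omega⟩
  set G : ℕ → ℝ := fun k =>
    (if k = 0 then 2 * ∑ j ∈ Finset.Icc (i.val + 1) l, w j + w i.val
     else if k = m + 2 - 1 then
       2 * ∑ j ∈ Finset.Icc (m + 2 - i.val) l, w j + w (m + 2 - 1 - i.val)
     else w ((i.val : ℤ) - (k : ℤ)).natAbs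
        - (w (i.val + k) + w (2 * (m + 2) - 2 - i.val - k))) * f k with hG
  have h0 : ∑ k : Fin (m + 2), antiReflectiveMatrix (m + 2) l w i k * f (k.val)
      = ∑ k ∈ Finset.range (m + 2), G k := by
    rw [← Fin.sum_univ_eq_sum_range G (m + 2)]
    apply Finset.sum_congr rfl
    intro k _
    simp only [hG, antiReflectiveMatrix, Matrix.of_apply]
    rw [if_neg hi0, if_neg hin]
  have hilt : i.val < m + 2 := i.isLt
  have hint : ∑ j ∈ Finset.range m, G (j + 1)
      = ∑ k ∈ Finset.Icc (1 : ℤ) (((m + 2 : ℕ) : ℤ) - 2),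
          (w ((i.val : ℤ) - k).natAbs - w ((i.val : ℤ) + k).natAbs
            - w (2 * ((m + 2 : ℕ) : ℤ) - 2 - (i.val : ℤ) - k).natAbs) * f k := by
    refine Finset.sum_nbij' (fun j => (j : ℤ) + 1) (fun k => (k - 1).toNat) ?_ ?_ ?_ ?_ ?_
    · intro a ha; simp only [Finset.mem_range] at ha; simp only [Finset.mem_Icc]; beta_reduce; omega
    · intro a ha; simp only [Finset.mem_Icc] at ha; simp only [Finset.mem_range]; beta_reduce; omega
    · intro a ha; simp only [Finset.mem_range] at ha; beta_reduce; omega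
    · intro a ha; simp only [Finset.mem_Icc] at ha; beta_reduce; omega
    · intro a ha
      simp only [Finset.mem_range] at ha
      simp only [hG]
      rw [if_neg (by omega), if_neg (by omega)]
      have c1 : ((a + 1 : ℕ) : ℤ) = (a : ℤ) + 1 := by push_cast; ring
      have c2 : i.val + (a + 1) = ((i.val : ℤ) + ((a : ℤ) + 1)).natAbs := by omega
      have c3 : 2 * (m + 2) - 2 - i.val - (a + 1)
          = (2 * ((m + 2 : ℕ) : ℤ) - 2 - (i.val : ℤ) - ((a : ℤ) + 1)).natAbs := by omega
      rw [c1, c2, c3]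
      ring
  have hG0 : G 0 = (2 * ∑ k ∈ Finset.Icc ((i.val : ℤ) + 1) (l : ℤ), w k.natAbs
      + w (i.val : ℤ).natAbs) * f 0 := by
    simp only [hG, if_true, eq_self_iff_true]
    have c1 : ((i.val : ℤ) + 1) = ((i.val + 1 : ℕ) : ℤ) := by push_cast; ring
    rw [c1, sum_Icc_coe (fun k => w k.natAbs) (i.val + 1) l]
    norm_num
  have hGn : G (m + 1) = (2 * ∑ k ∈ Finset.Icc (((m + 2 : ℕ) : ℤ) - i.val) (l : ℤ), w k.natAbs
      + w (((m + 2 : ℕ) : ℤ) - 1 - i.val).natAbs) * f (((m + 2 : ℕ) : ℤ) - 1) := by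
    simp only [hG]
    rw [if_neg (by omega), if_pos (by omega)]
    have c1 : (((m + 2 : ℕ) : ℤ) - i.val) = ((m + 2 - i.val : ℕ) : ℤ) := by omega
    have c2 : m + 2 - 1 - i.val = (((m + 2 : ℕ) : ℤ) - 1 - (i.val : ℤ)).natAbs := by omega
    have c3 : ((m + 1 : ℕ) : ℤ) = ((m + 2 : ℕ) : ℤ) - 1 := by push_cast; ring
    rw [c1, sum_Icc_coe (fun k => w k.natAbs) (m + 2 - i.val) l, c2, ← c3]
    norm_num
  have hck := conv_key (m + 2) l hn hl hln w hzero (i.val : ℤ) (by omega) (by omega) f hf1 hf2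
  rw [h0, Finset.sum_range_succ, Finset.sum_range_succ', hint, hG0, hGn]
  linarith [hck]

open Finset in
theorem ar_part1 (n l : ℕ) (hn : 3 ≤ n)
    (hl : 0 < l) (hln : l ≤ (n - 1) / 2) (w : ℕ → ℝ)
    (hpos : ∀ j, j ≤ l → 0 < w j)
    (hzero : ∀ k, l < k → w k = 0)
    (hsum : w 0 + 2 * ∑ j ∈ Finset.Icc 1 l, w j = 1)
    (D : Matrix (Fin n) (Fin n) ℝ)
    (hD : D = Matrix.diagonal (fun i : Fin n =>
      if i.val = 0 ∨ i.val = n - 1 then (1 : ℝ)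
      else w 0 + 2 * ∑ j ∈ Finset.Icc 1 l,
        w j * Real.cos ((j : ℝ) * (i.val : ℝ) * Real.pi / ((n : ℝ) - 1)))) :
    antiReflectiveMatrix n l w * antiReflectiveTransform n
        = antiReflectiveTransform n * D := by
  have hln' : 2 * l ≤ n - 1 := by omega
  have hl1 : 1 ≤ l := hl
  have hnR : (0 : ℝ) < (n : ℝ) - 1 := by
    have : (3 : ℝ) ≤ (n : ℝ) := by exact_mod_cast hn
    linarith
  have hnR0 : ((n : ℝ) - 1) ≠ 0 := ne_of_gt hnR
  have hwsumZ : ∑ m ∈ Finset.Icc (1 : ℤ) (l : ℤ), w m.natAbs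
      = ∑ m ∈ Finset.Icc 1 l, w m := by
    rw [show ((1 : ℤ)) = ((1 : ℕ) : ℤ) by norm_num,
      sum_Icc_coe (fun m => w m.natAbs) 1 l]
    simp
  ext i j
  rw [Matrix.mul_apply, hD, Matrix.mul_diagonal]
  by_cases hi0 : i.val = 0
  · have ha : (⟨0, by omega⟩ : Fin n).val = 0 := rfl
    have hsingle : ∑ k : Fin n, antiReflectiveMatrix n l w i k * antiReflectiveTransform n k j
        = antiReflectiveTransform n i j := by
      rw [Finset.sum_eq_single (⟨0, by omega⟩ : Fin n)]
      · have h1 : antiReflectiveMatrix n l w i ⟨0, by omega⟩ = 1 := by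
          simp [antiReflectiveMatrix, hi0, ha]
          linarith [hsum]
        have h2 : antiReflectiveTransform n (⟨0, by omega⟩ : Fin n) j
            = antiReflectiveTransform n i j := by
          simp only [antiReflectiveTransform, Matrix.of_apply, ha, hi0]
        rw [h1, h2, one_mul]
      · intro b _ hb
        have hbv : b.val ≠ 0 := fun h => hb (Fin.ext (by rw [h, ha]))
        simp [antiReflectiveMatrix, hi0, hbv]
      · intro h; exact absurd (Finset.mem_univ _) h
    rw [hsingle]
    by_cases hj : j.val = 0 ∨ j.val = n - 1
    · rw [if_pos hj, mul_one]
    · rw [if_neg hj]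
      have : antiReflectiveTransform n i j = 0 := by
        push_neg at hj
        simp only [antiReflectiveTransform, Matrix.of_apply, if_neg hj.1, if_neg hj.2]
        rw [if_pos (Or.inl hi0)]
      rw [this, zero_mul]
  · have h1n : n - 1 ≠ 0 := by omega
    by_cases hin : i.val = n - 1
    · have ha : (⟨n - 1, by omega⟩ : Fin n).val = n - 1 := rfl
      have hsingle : ∑ k : Fin n, antiReflectiveMatrix n l w i k * antiReflectiveTransform n k j
          = antiReflectiveTransform n i j := by
        rw [Finset.sum_eq_single (⟨n - 1, by omega⟩ : Fin n)]
        · have h1 : antiReflectiveMatrix n l w i ⟨n - 1, by omega⟩ = 1 := by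
            simp [antiReflectiveMatrix, hi0, hin, ha, h1n]
            linarith [hsum]
          have h2 : antiReflectiveTransform n (⟨n - 1, by omega⟩ : Fin n) j
              = antiReflectiveTransform n i j := by
            simp only [antiReflectiveTransform, Matrix.of_apply, ha, hin]
          rw [h1, h2, one_mul]
        · intro b _ hb
          have hbv : b.val ≠ n - 1 := fun h => hb (Fin.ext (by rw [h, ha]))
          simp [antiReflectiveMatrix, hi0, hin, hbv, h1n]
        · intro h; exact absurd (Finset.mem_univ _) h
      rw [hsingle]
      by_cases hj : j.val = 0 ∨ j.val = n - 1
      · rw [if_pos hj, mul_one]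
      · rw [if_neg hj]
        have : antiReflectiveTransform n i j = 0 := by
          push_neg at hj
          simp only [antiReflectiveTransform, Matrix.of_apply, if_neg hj.1, if_neg hj.2]
          rw [if_pos (Or.inr hin)]
        rw [this, zero_mul]
    · -- interior row
      by_cases hj0 : j.val = 0
      · -- first column : linear eigenvector, eigenvalue 1
        set f : ℤ → ℝ := fun t => (n : ℝ) - 1 - t with hf
        set c : ℝ := 1 / Real.sqrt (∑ k ∈ Finset.range n, (k : ℝ) ^ 2) with hc
        have hQf : ∀ k : Fin n, antiReflectiveTransform n k j = f k.val * c := by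
          intro k
          simp only [antiReflectiveTransform, Matrix.of_apply, if_pos hj0, hf, hc]
          push_cast
          ring
        have hra := row_apply n l hn hl1 hln' w hzero i hi0 hin f
          (by intro t; simp only [hf]; push_cast; ring)
          (by intro t; simp only [hf]; push_cast; ring)
        have hL : ∑ k : Fin n, antiReflectiveMatrix n l w i k * antiReflectiveTransform n k j
            = (∑ k : Fin n, antiReflectiveMatrix n l w i k * f k.val) * c := by
          rw [Finset.sum_mul]
          exact Finset.sum_congr rfl fun k _ => by rw [hQf k]; ring
        have heig : w 0 * f i.val
            + ∑ m ∈ Finset.Icc (1 : ℤ) (l : ℤ), w m.natAbs * (f (i.val - m) + f (i.val + m))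
            = f i.val := by
          have : ∀ m ∈ Finset.Icc (1 : ℤ) (l : ℤ),
              w m.natAbs * (f (i.val - m) + f (i.val + m)) = w m.natAbs * (2 * f i.val) := by
            intro m _
            simp only [hf]
            push_cast
            ring
          rw [Finset.sum_congr rfl this, ← Finset.sum_mul, hwsumZ]
          linear_combination f ((i.val : ℕ) : ℤ) * hsum
        rw [hL, hra, heig, if_pos (Or.inl hj0), mul_one, hQf i]
      · by_cases hjn : j.val = n - 1
        · -- last column : linear eigenvector, eigenvalue 1
          set f : ℤ → ℝ := fun t => (t : ℝ) with hf
          set c : ℝ := 1 / Real.sqrt (∑ k ∈ Finset.range n, (k : ℝ) ^ 2) with hc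
          have hQf : ∀ k : Fin n, antiReflectiveTransform n k j = f k.val * c := by
            intro k
            simp only [antiReflectiveTransform, Matrix.of_apply, if_neg hj0, if_pos hjn, hf, hc]
            push_cast
            ring
          have hra := row_apply n l hn hl1 hln' w hzero i hi0 hin f
            (by intro t; simp only [hf]; push_cast; ring)
            (by intro t; simp only [hf]; push_cast; ring)
          have hL : ∑ k : Fin n, antiReflectiveMatrix n l w i k * antiReflectiveTransform n k j
              = (∑ k : Fin n, antiReflectiveMatrix n l w i k * f k.val) * c := by
            rw [Finset.sum_mul]
            exact Finset.sum_congr rfl fun k _ => by rw [hQf k]; ring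
          have heig : w 0 * f i.val
              + ∑ m ∈ Finset.Icc (1 : ℤ) (l : ℤ), w m.natAbs * (f (i.val - m) + f (i.val + m))
              = f i.val := by
            have : ∀ m ∈ Finset.Icc (1 : ℤ) (l : ℤ),
                w m.natAbs * (f (i.val - m) + f (i.val + m)) = w m.natAbs * (2 * f i.val) := by
              intro m _
              simp only [hf]
              push_cast
              ring
            rw [Finset.sum_congr rfl this, ← Finset.sum_mul, hwsumZ]
            linear_combination f ((i.val : ℕ) : ℤ) * hsum
          rw [hL, hra, heig, if_pos (Or.inr hjn), mul_one, hQf i]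
        · -- interior column : sine eigenvector
          set f : ℤ → ℝ := fun t =>
            Real.sin ((t : ℝ) * (j.val : ℝ) * Real.pi / ((n : ℝ) - 1)) with hf
          set c : ℝ := Real.sqrt (2 / ((n : ℝ) - 1)) with hc
          have hf0 : f 0 = 0 := by simp [hf]
          have hfn : f ((n : ℤ) - 1) = 0 := by
            simp only [hf]
            rw [show (((n : ℤ) - 1 : ℤ) : ℝ) * (j.val : ℝ) * Real.pi / ((n : ℝ) - 1)
                = (j.val : ℝ) * Real.pi by push_cast; field_simp]
            exact Real.sin_nat_mul_pi j.val
          have hf1 : ∀ t : ℤ, f (-t) = 2 * f 0 - f t := by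
            intro t
            simp only [hf]
            rw [show ((-t : ℤ) : ℝ) * (j.val : ℝ) * Real.pi / ((n : ℝ) - 1)
                = -((t : ℝ) * (j.val : ℝ) * Real.pi / ((n : ℝ) - 1)) by push_cast; ring,
              Real.sin_neg]
            simp
          have hf2 : ∀ t : ℤ, f (2 * (n : ℤ) - 2 - t) = 2 * f ((n : ℤ) - 1) - f t := by
            intro t
            simp only [hf] at hfn ⊢
            rw [show ((2 * (n : ℤ) - 2 - t : ℤ) : ℝ) * (j.val : ℝ) * Real.pi / ((n : ℝ) - 1)
                = ((2 * j.val : ℕ) : ℝ) * Real.pi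
                  - (t : ℝ) * (j.val : ℝ) * Real.pi / ((n : ℝ) - 1) by
              push_cast; field_simp]
            rw [Real.sin_sub, Real.sin_nat_mul_pi,
              show ((2 * j.val : ℕ) : ℝ) * Real.pi = (j.val : ℝ) * (2 * Real.pi) by
                push_cast; ring,
              Real.cos_nat_mul_two_pi]
            rw [hfn]
            ring
          have hQf : ∀ k : Fin n, antiReflectiveTransform n k j = f k.val * c := by
            intro k
            simp only [antiReflectiveTransform, Matrix.of_apply, if_neg hj0, if_neg hjn]
            by_cases hk : k.val = 0 ∨ k.val = n - 1
            · rw [if_pos hk]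
              rcases hk with hk | hk
              · rw [show ((k.val : ℤ)) = (0 : ℤ) by omega, hf0, zero_mul]
              · rw [show ((k.val : ℤ)) = (n : ℤ) - 1 by omega, hfn, zero_mul]
            · rw [if_neg hk]
              simp only [hf, hc]
              push_cast
              ring
          have hra := row_apply n l hn hl1 hln' w hzero i hi0 hin f hf1 hf2
          have hL : ∑ k : Fin n, antiReflectiveMatrix n l w i k * antiReflectiveTransform n k j
              = (∑ k : Fin n, antiReflectiveMatrix n l w i k * f k.val) * c := by
            rw [Finset.sum_mul]
            exact Finset.sum_congr rfl fun k _ => by rw [hQf k]; ring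
          have heig : w 0 * f i.val
              + ∑ m ∈ Finset.Icc (1 : ℤ) (l : ℤ), w m.natAbs * (f (i.val - m) + f (i.val + m))
              = f i.val * (w 0 + 2 * ∑ m ∈ Finset.Icc 1 l,
                  w m * Real.cos ((m : ℝ) * (j.val : ℝ) * Real.pi / ((n : ℝ) - 1))) := by
            have hterm : ∀ m ∈ Finset.Icc (1 : ℤ) (l : ℤ),
                w m.natAbs * (f (i.val - m) + f (i.val + m))
                = w m.natAbs * (2 * f i.val
                    * Real.cos ((m : ℝ) * (j.val : ℝ) * Real.pi / ((n : ℝ) - 1))) := by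
              intro m _
              simp only [hf]
              rw [show ((i.val - m : ℤ) : ℝ) * (j.val : ℝ) * Real.pi / ((n : ℝ) - 1)
                  = (i.val : ℝ) * (j.val : ℝ) * Real.pi / ((n : ℝ) - 1)
                    - (m : ℝ) * (j.val : ℝ) * Real.pi / ((n : ℝ) - 1) by push_cast; ring,
                show ((i.val + m : ℤ) : ℝ) * (j.val : ℝ) * Real.pi / ((n : ℝ) - 1)
                  = (i.val : ℝ) * (j.val : ℝ) * Real.pi / ((n : ℝ) - 1)
                    + (m : ℝ) * (j.val : ℝ) * Real.pi / ((n : ℝ) - 1) by push_cast; ring,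
                Real.sin_sub, Real.sin_add]
              push_cast
              ring
            rw [Finset.sum_congr rfl hterm]
            rw [show ((1 : ℤ)) = ((1 : ℕ) : ℤ) by norm_num,
              sum_Icc_coe (fun m => w m.natAbs
                * (2 * f i.val * Real.cos ((m : ℝ) * (j.val : ℝ) * Real.pi / ((n : ℝ) - 1))))
                1 l]
            have : ∀ m ∈ Finset.Icc 1 l,
                w ((m : ℤ)).natAbs * (2 * f i.val
                  * Real.cos ((((m : ℤ)) : ℝ) * (j.val : ℝ) * Real.pi / ((n : ℝ) - 1)))
                = 2 * f i.val * (w m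
                  * Real.cos ((m : ℝ) * (j.val : ℝ) * Real.pi / ((n : ℝ) - 1))) := by
              intro m _
              simp only [Int.natAbs_natCast]
              push_cast
              ring
            rw [Finset.sum_congr rfl this, ← Finset.mul_sum]
            ring
          have hd : ¬(j.val = 0 ∨ j.val = n - 1) := by tauto
          rw [hL, hra, heig, if_neg hd, hQf i]
          ring

open Finset in
theorem ar_isUnit (n : ℕ) (hn : 3 ≤ n) : IsUnit (antiReflectiveTransform n) := by
  rw [Matrix.isUnit_iff_isUnit_det, isUnit_iff_ne_zero]
  intro hdet
  obtain ⟨v, hv0, hveq⟩ := Matrix.exists_mulVec_eq_zero_iff.mpr hdet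
  have h1n : n - 1 ≠ 0 := by omega
  have hηpos : 0 < Real.sqrt (∑ k ∈ Finset.range n, (k : ℝ) ^ 2) := by
    apply Real.sqrt_pos.mpr
    apply Finset.sum_pos' (fun k _ => by positivity)
    exact ⟨1, Finset.mem_range.mpr (by omega), by norm_num⟩
  have hnR : (0 : ℝ) < (n : ℝ) - 1 := by
    have : (3 : ℝ) ≤ (n : ℝ) := by exact_mod_cast hn
    linarith
  have hcpos : 0 < Real.sqrt (2 / ((n : ℝ) - 1)) := Real.sqrt_pos.mpr (by positivity)
  have hrow : ∀ x : Fin n, ∑ jj : Fin n, antiReflectiveTransform n x jj * v jj = 0 := by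
    intro x
    have := congrFun hveq x
    simpa [Matrix.mulVec, dotProduct] using this
  have hNcast : ((n - 1 : ℕ) : ℝ) = (n : ℝ) - 1 := by
    have : (1 : ℕ) ≤ n := by omega
    push_cast [this]
    ring
  -- v vanishes at the first index
  have hv00 : v ⟨0, by omega⟩ = 0 := by
    have h := hrow ⟨0, by omega⟩
    rw [Finset.sum_eq_single (⟨0, by omega⟩ : Fin n)] at h
    · have hQ : antiReflectiveTransform n ⟨0, by omega⟩ (⟨0, by omega⟩ : Fin n)
          = ((n : ℝ) - 1) / Real.sqrt (∑ k ∈ Finset.range n, (k : ℝ) ^ 2) := by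
        simp [antiReflectiveTransform]
      rw [hQ] at h
      rcases mul_eq_zero.mp h with h' | h'
      · exact absurd h' (by positivity)
      · exact h'
    · intro b _ hb
      have hbv : b.val ≠ 0 := fun hh => hb (Fin.ext (by simpa using hh))
      by_cases hbn : b.val = n - 1
      · simp [antiReflectiveTransform, hbv, hbn, h1n]
      · simp [antiReflectiveTransform, hbv, hbn]
    · intro h'; exact absurd (Finset.mem_univ _) h'
  -- v vanishes at the last index
  have hvnn : v ⟨n - 1, by omega⟩ = 0 := by
    have h := hrow ⟨n - 1, by omega⟩
    rw [Finset.sum_eq_single (⟨n - 1, by omega⟩ : Fin n)] at h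
    · have hQ : antiReflectiveTransform n ⟨n - 1, by omega⟩ (⟨n - 1, by omega⟩ : Fin n)
          = ((n - 1 : ℕ) : ℝ) / Real.sqrt (∑ k ∈ Finset.range n, (k : ℝ) ^ 2) := by
        simp [antiReflectiveTransform, h1n]
      rw [hQ] at h
      rcases mul_eq_zero.mp h with h' | h'
      · exfalso
        rw [hNcast] at h'
        revert h'
        positivity
      · exact h'
    · intro b _ hb
      have hbv : b.val ≠ n - 1 := fun hh => hb (Fin.ext (by simpa using hh))
      by_cases hb0 : b.val = 0
      · simp [antiReflectiveTransform, hbv, hb0, hNcast]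
      · simp [antiReflectiveTransform, hbv, hb0]
    · intro h'; exact absurd (Finset.mem_univ _) h'
  -- the truncated vector
  set vt : ℕ → ℝ := fun t => if h : t < n then v ⟨t, h⟩ else 0 with hvt
  obtain ⟨m, rfl⟩ : ∃ m, n = m + 2 := ⟨n - 2, by omega⟩
  have hrel : ∀ a : ℕ, 1 ≤ a → a ≤ m →
      ∑ t ∈ Finset.Icc 1 m,
        Real.sin ((a : ℝ) * (t : ℝ) * Real.pi / (((m + 2 : ℕ) : ℝ) - 1)) * vt t = 0 := by
    intro a ha1 ha2
    have h := hrow ⟨a, by omega⟩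
    set F : ℕ → ℝ := fun t => if ht : t < m + 2 then
        antiReflectiveTransform (m + 2) ⟨a, by omega⟩ ⟨t, ht⟩ * v ⟨t, ht⟩ else 0 with hF
    have h0 : ∑ jj : Fin (m + 2), antiReflectiveTransform (m + 2) ⟨a, by omega⟩ jj * v jj
        = ∑ t ∈ Finset.range (m + 2), F t := by
      rw [← Fin.sum_univ_eq_sum_range F (m + 2)]
      apply Finset.sum_congr rfl
      intro k _
      simp only [hF, Fin.is_lt, dif_pos, Fin.eta]
    have hF0 : F 0 = 0 := by
      have : F 0 = antiReflectiveTransform (m + 2) ⟨a, by omega⟩ ⟨0, by omega⟩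
          * v ⟨0, by omega⟩ := by
        simp only [hF]
        rw [dif_pos (by omega : (0:ℕ) < m + 2)]
      rw [this, hv00, mul_zero]
    have hFn : F (m + 1) = 0 := by
      have : F (m + 1) = antiReflectiveTransform (m + 2) ⟨a, by omega⟩ ⟨m + 1, by omega⟩
          * v ⟨m + 1, by omega⟩ := by
        simp only [hF]
        rw [dif_pos (by omega : m + 1 < m + 2)]
      rw [this]
      have : v (⟨m + 1, by omega⟩ : Fin (m + 2)) = 0 := hvnn
      rw [this, mul_zero]
    have hmid : ∑ t ∈ Finset.range m, F (t + 1)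
        = Real.sqrt (2 / (((m + 2 : ℕ) : ℝ) - 1)) * ∑ t ∈ Finset.Icc 1 m,
            Real.sin ((a : ℝ) * (t : ℝ) * Real.pi / (((m + 2 : ℕ) : ℝ) - 1)) * vt t := by
      rw [Finset.mul_sum]
      refine Finset.sum_nbij' (fun t => t + 1) (fun t => t - 1) ?_ ?_ ?_ ?_ ?_
      · intro x hx; simp only [Finset.mem_range] at hx; simp only [Finset.mem_Icc]; omega
      · intro x hx; simp only [Finset.mem_Icc] at hx; simp only [Finset.mem_range]; omega
      · intro x hx; simp only [Finset.mem_range] at hx; omega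
      · intro x hx; simp only [Finset.mem_Icc] at hx; omega
      · intro x hx
        simp only [Finset.mem_range] at hx
        simp only [hF]
        rw [dif_pos (by omega : x + 1 < m + 2)]
        have hQ : antiReflectiveTransform (m + 2) ⟨a, by omega⟩ ⟨x + 1, by omega⟩
            = Real.sqrt (2 / (((m + 2 : ℕ) : ℝ) - 1)) *
              Real.sin ((a : ℝ) * ((x + 1 : ℕ) : ℝ) * Real.pi / (((m + 2 : ℕ) : ℝ) - 1)) := by
          have c1 : x + 1 ≠ 0 := by omega
          have c2 : x + 1 ≠ m + 2 - 1 := by omega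
          have c3 : ¬(a = 0 ∨ a = m + 2 - 1) := by push_neg; omega
          simp only [antiReflectiveTransform, Matrix.of_apply]
          rw [if_neg c1, if_neg c2, if_neg c3]
        have hv : v (⟨x + 1, by omega⟩ : Fin (m + 2)) = vt (x + 1) := by
          simp only [hvt]
          rw [dif_pos (by omega : x + 1 < m + 2)]
        rw [hQ, hv]
        ring
    have hc0 : Real.sqrt (2 / (((m + 2 : ℕ) : ℝ) - 1)) ≠ 0 := ne_of_gt hcpos
    rw [h0, Finset.sum_range_succ, Finset.sum_range_succ', hmid, hF0, hFn] at h
    have : Real.sqrt (2 / (((m + 2 : ℕ) : ℝ) - 1)) * ∑ t ∈ Finset.Icc 1 m,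
        Real.sin ((a : ℝ) * (t : ℝ) * Real.pi / (((m + 2 : ℕ) : ℝ) - 1)) * vt t = 0 := by
      linarith [h]
    exact (mul_eq_zero.mp this).resolve_left hc0
  -- kill the interior coordinates by orthogonality
  have hkill : ∀ a : ℕ, 1 ≤ a → a ≤ m → vt a = 0 := by
    intro a ha1 ha2
    have hc : ((m + 1 : ℕ) : ℝ) = ((m + 2 : ℕ) : ℝ) - 1 := by push_cast; ring
    have hS0 : ∑ x ∈ Finset.Icc 1 m,
        Real.sin ((x : ℝ) * (a : ℝ) * Real.pi / (((m + 2 : ℕ) : ℝ) - 1))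
          * (∑ t ∈ Finset.Icc 1 m,
              Real.sin ((x : ℝ) * (t : ℝ) * Real.pi / (((m + 2 : ℕ) : ℝ) - 1)) * vt t) = 0 := by
      apply Finset.sum_eq_zero
      intro x hx
      simp only [Finset.mem_Icc] at hx
      rw [hrel x hx.1 hx.2, mul_zero]
    have hswap : ∑ x ∈ Finset.Icc 1 m,
        Real.sin ((x : ℝ) * (a : ℝ) * Real.pi / (((m + 2 : ℕ) : ℝ) - 1))
          * (∑ t ∈ Finset.Icc 1 m,
              Real.sin ((x : ℝ) * (t : ℝ) * Real.pi / (((m + 2 : ℕ) : ℝ) - 1)) * vt t)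
        = ∑ t ∈ Finset.Icc 1 m,
            (∑ x ∈ Finset.Icc 1 m,
              Real.sin ((x : ℝ) * (a : ℝ) * Real.pi / (((m + 2 : ℕ) : ℝ) - 1))
                * Real.sin ((x : ℝ) * (t : ℝ) * Real.pi / (((m + 2 : ℕ) : ℝ) - 1))) * vt t := by
      rw [Finset.sum_congr rfl (fun x _ => Finset.mul_sum _ _ _), Finset.sum_comm]
      apply Finset.sum_congr rfl
      intro t _
      rw [Finset.sum_mul]
      apply Finset.sum_congr rfl
      intro x _
      ring
    have horthall : ∀ t ∈ Finset.Icc 1 m,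
        (∑ x ∈ Finset.Icc 1 m,
          Real.sin ((x : ℝ) * (a : ℝ) * Real.pi / (((m + 2 : ℕ) : ℝ) - 1))
            * Real.sin ((x : ℝ) * (t : ℝ) * Real.pi / (((m + 2 : ℕ) : ℝ) - 1))) * vt t
        = (if a = t then (((m + 2 : ℕ) : ℝ) - 1) / 2 else 0) * vt t := by
      intro t ht
      simp only [Finset.mem_Icc] at ht
      have horth := sin_orth (m + 1) (by omega) a t ha1 (by omega) ht.1 (by omega)
      rw [hc] at horth
      rw [show m + 1 - 1 = m by omega] at horth
      rw [horth]
    rw [hswap, Finset.sum_congr rfl horthall] at hS0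
    rw [Finset.sum_eq_single a (fun b _ hb => by rw [if_neg (fun hh => hb hh.symm), zero_mul])
      (fun ha => absurd (Finset.mem_Icc.mpr ⟨ha1, ha2⟩) ha)] at hS0
    rw [if_pos rfl] at hS0
    have hne : (((m + 2 : ℕ) : ℝ) - 1) / 2 ≠ 0 := by positivity
    exact (mul_eq_zero.mp hS0).resolve_left hne
  -- conclude v = 0
  apply hv0
  funext x
  simp only [Pi.zero_apply]
  by_cases hx0 : x.val = 0
  · have : x = (⟨0, by omega⟩ : Fin (m + 2)) := Fin.ext hx0
    rw [this]
    exact hv00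
  · by_cases hxn : x.val = m + 1
    · have : x = (⟨m + 1, by omega⟩ : Fin (m + 2)) := Fin.ext hxn
      rw [this]
      exact hvnn
    · have h1 : 1 ≤ x.val := by omega
      have h2 : x.val ≤ m := by have := x.isLt; omega
      have := hkill x.val h1 h2
      simp only [hvt] at this
      rw [dif_pos x.isLt] at this
      simpa using this


/-- The ART matrix diagonalizes the Anti-Reflective matrix:
`W^AR Q^AR = Q^AR D` with `D = diag(1, λ̂_1, …, λ̂_{n-2}, 1)`,
`λ̂_i = w_0 + 2 ∑_{j=1}^l w_j cos(j i π/(n-1))`; moreover `Q^AR` is invertible,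
so `W^AR = Q^AR D (Q^AR)⁻¹`. -/
theorem stmt_15 (n l : ℕ) (hn : 3 ≤ n)
    (hl : 0 < l) (hln : l ≤ (n - 1) / 2) (w : ℕ → ℝ)
    (hpos : ∀ j, j ≤ l → 0 < w j)
    (hzero : ∀ k, l < k → w k = 0)
    (hsum : w 0 + 2 * ∑ j ∈ Finset.Icc 1 l, w j = 1)
    (D : Matrix (Fin n) (Fin n) ℝ)
    (hD : D = Matrix.diagonal (fun i : Fin n =>
      if i.val = 0 ∨ i.val = n - 1 then (1 : ℝ)
      else w 0 + 2 * ∑ j ∈ Finset.Icc 1 l,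
        w j * Real.cos ((j : ℝ) * (i.val : ℝ) * Real.pi / ((n : ℝ) - 1)))) :
    antiReflectiveMatrix n l w * antiReflectiveTransform n
        = antiReflectiveTransform n * D ∧
    IsUnit (antiReflectiveTransform n) ∧
    antiReflectiveMatrix n l w
        = antiReflectiveTransform n * D * (antiReflectiveTransform n)⁻¹ := by
  have h1 := ar_part1 n l hn hl hln w hpos hzero hsum D hD
  have h2 := ar_isUnit n hn
  refine ⟨h1, h2, ?_⟩
  have hdet : IsUnit (antiReflectiveTransform n).det :=
    (Matrix.isUnit_iff_isUnit_det _).mp h2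
  rw [← h1, Matrix.mul_assoc, Matrix.mul_nonsing_inv _ hdet, Matrix.mul_one]
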